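/- If r : ℝ → ℝ is defined by r(v) = sqrt(c₁ * cos(2v) - c₂ * sin(2v)) on an interval where c₁ * cos(2v) - c₂ * sin(2v) > 0, then r satisfies the differential equation (r'(v))² + r(v) * r''(v) + 2 * r(v)² = 0 on that interval. -/

import Mathlib

theorem stmt0 (c₁ c₂ A B : ℝ)
    (r : ℝ → ℝ)
    (hr : ∀ v, r v = Real.sqrt (c₁ * Real.cos (2 * v) - c₂ * Real.sin (2 * v)))
    (hpos : ∀ v ∈ Set.Ioo A B, c₁ * Real.cos (2 * v) - c₂ * Real.sin (2 * v) > 0) :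
    ∀ v ∈ Set.Ioo A B,
      (deriv r v) ^ 2 + r v * deriv (deriv r) v + 2 * (r v) ^ 2 = 0 := by
  set f : ℝ → ℝ := fun v => c₁ * Real.cos (2 * v) - c₂ * Real.sin (2 * v) with hf
  set f1 : ℝ → ℝ := fun v => -2 * c₁ * Real.sin (2 * v) - 2 * c₂ * Real.cos (2 * v) with hf1
  have hrf : r = fun v => Real.sqrt (f v) := funext hr
  have hdf : ∀ v, HasDerivAt f (f1 v) v := by
    intro v
    have h2 : HasDerivAt (fun v : ℝ => 2 * v) 2 v := by
      simpa using (hasDerivAt_id v).const_mul 2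
    have hc : HasDerivAt (fun v : ℝ => Real.cos (2 * v)) (-Real.sin (2 * v) * 2) v :=
      (Real.hasDerivAt_cos (2 * v)).comp v h2
    have hs : HasDerivAt (fun v : ℝ => Real.sin (2 * v)) (Real.cos (2 * v) * 2) v :=
      (Real.hasDerivAt_sin (2 * v)).comp v h2
    have := (hc.const_mul c₁).sub (hs.const_mul c₂)
    refine this.congr_deriv ?_
    simp only [hf1]; ring
  have hdf1 : ∀ v, HasDerivAt f1 (-4 * f v) v := by
    intro v
    have h2 : HasDerivAt (fun v : ℝ => 2 * v) 2 v := by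
      simpa using (hasDerivAt_id v).const_mul 2
    have hc : HasDerivAt (fun v : ℝ => Real.cos (2 * v)) (-Real.sin (2 * v) * 2) v :=
      (Real.hasDerivAt_cos (2 * v)).comp v h2
    have hs : HasDerivAt (fun v : ℝ => Real.sin (2 * v)) (Real.cos (2 * v) * 2) v :=
      (Real.hasDerivAt_sin (2 * v)).comp v h2
    have := (hs.const_mul (-2 * c₁)).sub (hc.const_mul (2 * c₂))
    refine this.congr_deriv ?_
    simp only [hf]; ring
  set U : Set ℝ := {v | 0 < f v} with hU
  have hUopen : IsOpen U := by
    have : Continuous f := by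
      fun_prop
    exact isOpen_lt continuous_const this
  set g : ℝ → ℝ := fun v => f1 v / (2 * Real.sqrt (f v)) with hg
  have hdr : ∀ v ∈ U, HasDerivAt r (g v) v := by
    intro v hv
    rw [hrf]
    exact (hdf v).sqrt (ne_of_gt hv)
  have hderivr : ∀ v ∈ U, deriv r v = g v := fun v hv => (hdr v hv).deriv
  have hdg : ∀ v ∈ U, HasDerivAt g
      ((-4 * f v * (2 * Real.sqrt (f v)) - f1 v * (f1 v / Real.sqrt (f v))) /
        (2 * Real.sqrt (f v)) ^ 2) v := by
    intro v hv
    have hs : Real.sqrt (f v) ≠ 0 := ne_of_gt (Real.sqrt_pos.mpr hv)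
    have hsq : HasDerivAt (fun v => Real.sqrt (f v)) (f1 v / (2 * Real.sqrt (f v))) v :=
      (hdf v).sqrt (ne_of_gt hv)
    have hden : HasDerivAt (fun v => 2 * Real.sqrt (f v)) (f1 v / Real.sqrt (f v)) v := by
      have := hsq.const_mul 2
      refine this.congr_deriv ?_
      field_simp
    have hdne : 2 * Real.sqrt (f v) ≠ 0 := by positivity
    exact (hdf1 v).div hden hdne
  intro v hv
  have hvU : v ∈ U := hpos v hv
  have hUnhds : U ∈ nhds v := hUopen.mem_nhds hvU
  have heq : deriv r =ᶠ[nhds v] g :=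
    Filter.eventually_of_mem hUnhds hderivr
  have h2 : deriv (deriv r) v = deriv g v := heq.deriv_eq
  have h3 : deriv g v = (-4 * f v * (2 * Real.sqrt (f v)) - f1 v * (f1 v / Real.sqrt (f v))) /
      (2 * Real.sqrt (f v)) ^ 2 := (hdg v hvU).deriv
  have hfv : 0 < f v := hvU
  have hs : Real.sqrt (f v) ≠ 0 := ne_of_gt (Real.sqrt_pos.mpr hfv)
  have hsq : Real.sqrt (f v) ^ 2 = f v := Real.sq_sqrt hfv.le
  rw [hderivr v hvU, h2, h3, hrf, hg]
  field_simp
  nlinarith [hsq, sq_nonneg (f1 v)]
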